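/- Let G be a connected capacitated domination instance, let u ∈ V, and for i∈{0,1,2} let R_i = {v ∈ V : dist_G(u,v) ≡ i (mod 3)} and let G_i be the corresponding subinstance. Then: (a) every feasible demand assignment for G is also feasible for each G_i, so OPT(G_i) ≤ OPT(G) for each i; (b) if f_i is a feasible demand assignment for G_i for i=0,1,2, then f = f_0+f_1+f_2 is a feasible demand assignment for G with w(f) ≤ w(f_0)+w(f_1)+w(f_2); consequently, if each f_i is a minimum-cost feasible assignment for G_i, then w(f) ≤ 3·OPT(G). -/

import Mathlib

open Finset

variable {V : Type*} [Fintype V] [DecidableEq V]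

/-- The closed neighborhood `N[v]` of a vertex. -/
def closedNbhd (G : SimpleGraph V) [DecidableRel G.Adj] (v : V) : Finset V :=
  insert v (G.neighborFinset v)

/-- A demand assignment: nonnegative, supported on closed neighborhoods. -/
def IsAssignment (G : SimpleGraph V) [DecidableRel G.Adj] (f : V → V → ℝ) : Prop :=
  (∀ u v, 0 ≤ f u v) ∧ ∀ u v, v ∉ closedNbhd G u → f u v = 0

/-- Feasibility: the demand of every vertex is fully assigned. -/
def Feasible (G : SimpleGraph V) [DecidableRel G.Adj] (d : V → ℝ) (f : V → V → ℝ) : Prop :=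
  IsAssignment G f ∧ ∀ u, d u ≤ ∑ v ∈ closedNbhd G u, f u v

/-- Multiplicity `x_f(v) = ⌈(Σ_{u∈N[v]} f(u,v))/c(v)⌉`. -/
noncomputable def mult (G : SimpleGraph V) [DecidableRel G.Adj] (c : V → ℝ)
    (f : V → V → ℝ) (v : V) : ℤ :=
  ⌈(∑ u ∈ closedNbhd G v, f u v) / c v⌉

/-- Cost of a demand assignment. -/
noncomputable def cost (G : SimpleGraph V) [DecidableRel G.Adj] (w c : V → ℝ)
    (f : V → V → ℝ) : ℝ :=
  ∑ v, w v * (mult G c f v : ℝ)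

/-- Optimal cost of a feasible demand assignment. -/
noncomputable def OPT (G : SimpleGraph V) [DecidableRel G.Adj] (w c d : V → ℝ) : ℝ :=
  sInf {r | ∃ f, Feasible G d f ∧ cost G w c f = r}

/-- Feasibility for the LP relaxation of capacitated domination. -/
def LPFeasible (G : SimpleGraph V) [DecidableRel G.Adj] (c d : V → ℝ)
    (x : V → ℝ) (f : V → V → ℝ) : Prop :=
  (∀ u, 0 ≤ x u) ∧ IsAssignment G f ∧
  (∀ u, d u ≤ ∑ v ∈ closedNbhd G u, f u v) ∧
  (∀ u, ∑ v ∈ closedNbhd G u, f v u ≤ c u * x u) ∧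
  (∀ u, ∀ v ∈ closedNbhd G u, f v u ≤ d v * x u)

/-- Optimal value `OPT_f(G)` of the LP relaxation. -/
noncomputable def OPTf (G : SimpleGraph V) [DecidableRel G.Adj] (w c d : V → ℝ) : ℝ :=
  sInf {r | ∃ x f, LPFeasible G c d x f ∧ ∑ u, w u * x u = r}

/-- The subinstance graph on the same vertex set: keep exactly the edges of `G`
incident to a vertex of `R` (vertices outside `V_i = ∪_{v∈R} N[v]` become
isolated). -/
def subGraph (G : SimpleGraph V) (R : Finset V) : SimpleGraph V where
  Adj a b := G.Adj a b ∧ (a ∈ R ∨ b ∈ R)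
  symm := ⟨fun a b h => ⟨h.1.symm, h.2.symm⟩⟩
  loopless := ⟨fun a h => G.irrefl h.1⟩

instance (G : SimpleGraph V) [DecidableRel G.Adj] (R : Finset V) :
    DecidableRel (subGraph G R).Adj :=
  fun a b => inferInstanceAs (Decidable (G.Adj a b ∧ (a ∈ R ∨ b ∈ R)))

/-- The demands of the subinstance: `d` on `R`, zero elsewhere. -/
def subDemand (d : V → ℝ) (R : Finset V) : V → ℝ :=
  fun v => if v ∈ R then d v else 0

/-- Vertices whose distance to `u` is congruent to `i` mod 3. -/
noncomputable def distClass (G : SimpleGraph V) (u : V) (i : ℕ) : Finset V :=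
  Finset.univ.filter (fun v => G.dist u v % 3 = i)


section Helpers

variable {G : SimpleGraph V} [DecidableRel G.Adj]

lemma mem_closedNbhd {a v : V} : v ∈ closedNbhd G a ↔ v = a ∨ G.Adj a v := by
  simp [closedNbhd, SimpleGraph.mem_neighborFinset]

lemma self_mem_closedNbhd (a : V) : a ∈ closedNbhd G a := by
  simp [mem_closedNbhd]

lemma closedNbhd_comm {a v : V} : v ∈ closedNbhd G a ↔ a ∈ closedNbhd G v := by
  simp only [mem_closedNbhd]
  constructor <;> rintro (h | h)
  · exact Or.inl h.symm
  · exact Or.inr h.symm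
  · exact Or.inl h.symm
  · exact Or.inr h.symm

lemma sub_closedNbhd_subset (R : Finset V) (a : V) :
    closedNbhd (subGraph G R) a ⊆ closedNbhd G a := by
  intro v hv
  rw [mem_closedNbhd] at hv ⊢
  exact hv.imp id (fun h => h.1)

lemma sub_closedNbhd_of_mem {R : Finset V} {a : V} (ha : a ∈ R) :
    closedNbhd (subGraph G R) a = closedNbhd G a := by
  apply Finset.Subset.antisymm (sub_closedNbhd_subset R a)
  intro v hv
  rw [mem_closedNbhd] at hv ⊢
  exact hv.imp id (fun h => ⟨h, Or.inl ha⟩)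

/-- For an assignment of the subinstance, column sums over `N_G[v]` coincide with
column sums over the subinstance closed neighborhood. -/
lemma sum_col_eq {R : Finset V} {f : V → V → ℝ}
    (hf : IsAssignment (subGraph G R) f) (v : V) :
    ∑ u' ∈ closedNbhd G v, f u' v = ∑ u' ∈ closedNbhd (subGraph G R) v, f u' v := by
  refine (Finset.sum_subset (sub_closedNbhd_subset R v) ?_).symm
  intro x _ hx
  apply hf.2
  rw [closedNbhd_comm]
  exact hx

lemma mult_nonneg {c : V → ℝ} (hc : ∀ v, 0 < c v) {f : V → V → ℝ}
    (hf : ∀ a b, 0 ≤ f a b) (v : V) : 0 ≤ mult G c f v := by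
  apply Int.ceil_nonneg
  exact div_nonneg (Finset.sum_nonneg fun x _ => hf x v) (hc v).le

lemma cost_nonneg {w c : V → ℝ} (hw : ∀ v, 0 ≤ w v) (hc : ∀ v, 0 < c v)
    {f : V → V → ℝ} (hf : ∀ a b, 0 ≤ f a b) : 0 ≤ cost G w c f := by
  apply Finset.sum_nonneg
  intro v _
  have := mult_nonneg (G := G) hc hf v
  exact mul_nonneg (hw v) (by exact_mod_cast this)

lemma feasible_diag (d : V → ℝ) (hd : ∀ v, 0 ≤ d v) :
    Feasible G d (fun a b => if b = a then d a else 0) := by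
  refine ⟨⟨fun a b => ?_, fun a b h => ?_⟩, fun a => ?_⟩
  · dsimp only; split_ifs; exacts [hd a, le_rfl]
  · dsimp only; rw [if_neg]; rintro rfl; exact h (self_mem_closedNbhd _)
  · rw [Finset.sum_ite_eq' (closedNbhd G a) a (fun _ => d a),
      if_pos (self_mem_closedNbhd a)]

lemma OPT_nonempty (w c d : V → ℝ) (hd : ∀ v, 0 ≤ d v) :
    {r | ∃ f, Feasible G d f ∧ cost G w c f = r}.Nonempty :=
  ⟨_, _, feasible_diag d hd, rfl⟩

lemma OPT_bddBelow (w c d : V → ℝ) (hw : ∀ v, 0 ≤ w v) (hc : ∀ v, 0 < c v) :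
    BddBelow {r | ∃ f, Feasible G d f ∧ cost G w c f = r} := by
  refine ⟨0, fun r hr => ?_⟩
  obtain ⟨f, hf, rfl⟩ := hr
  exact cost_nonneg hw hc hf.1.1

lemma OPT_le {w c d : V → ℝ} (hw : ∀ v, 0 ≤ w v) (hc : ∀ v, 0 < c v)
    {f : V → V → ℝ} (hf : Feasible G d f) : OPT G w c d ≤ cost G w c f :=
  csInf_le (OPT_bddBelow w c d hw hc) ⟨f, hf, rfl⟩

/-- Part (a), first two claims, for an arbitrary subset `R`. -/
lemma restrict_feasible_cost {R : Finset V} {w c d : V → ℝ}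
    (hw : ∀ v, 0 ≤ w v) (hc : ∀ v, 0 < c v)
    {f : V → V → ℝ} (hf : Feasible G d f) :
    Feasible (subGraph G R) (subDemand d R)
      (fun a b => if b ∈ closedNbhd (subGraph G R) a then f a b else 0) ∧
    cost (subGraph G R) w c
      (fun a b => if b ∈ closedNbhd (subGraph G R) a then f a b else 0) ≤
      cost G w c f := by
  set g : V → V → ℝ := fun a b => if b ∈ closedNbhd (subGraph G R) a then f a b else 0
    with hg
  have hg0 : ∀ a b, 0 ≤ g a b := by
    intro a b; simp only [hg]; split_ifs; exacts [hf.1.1 a b, le_rfl]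
  refine ⟨⟨⟨hg0, fun a b h => by simp only [hg, if_neg h]⟩, fun a => ?_⟩, ?_⟩
  · by_cases ha : a ∈ R
    · have he : closedNbhd (subGraph G R) a = closedNbhd G a := sub_closedNbhd_of_mem ha
      have : ∑ v ∈ closedNbhd (subGraph G R) a, g a v = ∑ v ∈ closedNbhd G a, f a v := by
        rw [he]
        refine Finset.sum_congr rfl fun x hx => ?_
        simp only [hg, if_pos (he ▸ hx : x ∈ closedNbhd (subGraph G R) a)]
      rw [this, subDemand, if_pos ha]
      exact hf.2 a
    · rw [subDemand, if_neg ha]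
      exact Finset.sum_nonneg fun x _ => hg0 a x
  · apply Finset.sum_le_sum
    intro v _
    apply mul_le_mul_of_nonneg_left _ (hw v)
    rw [Int.cast_le]
    apply Int.ceil_le_ceil
    apply div_le_div_of_nonneg_right ?_ (hc v).le
    · refine Finset.sum_le_sum_of_subset_of_nonneg (sub_closedNbhd_subset R v) ?_ |>.trans' ?_
      · intro x _ _; exact hf.1.1 x v
      · apply Finset.sum_le_sum
        intro x _
        simp only [hg]
        split_ifs; exacts [le_rfl, hf.1.1 x v]

lemma OPT_sub_le {R : Finset V} {w c d : V → ℝ}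
    (hw : ∀ v, 0 ≤ w v) (hc : ∀ v, 0 < c v) (hd : ∀ v, 0 ≤ d v) :
    OPT (subGraph G R) w c (subDemand d R) ≤ OPT G w c d := by
  apply le_csInf (OPT_nonempty w c d hd)
  rintro r ⟨f, hf, rfl⟩
  obtain ⟨hfe, hco⟩ := restrict_feasible_cost (R := R) hw hc hf
  exact (OPT_le hw hc hfe).trans hco

lemma mult_add3 {R₀ R₁ R₂ : Finset V} {c : V → ℝ} {f₀ f₁ f₂ : V → V → ℝ}
    (h₀ : IsAssignment (subGraph G R₀) f₀)
    (h₁ : IsAssignment (subGraph G R₁) f₁)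
    (h₂ : IsAssignment (subGraph G R₂) f₂) (v : V) :
    mult G c (fun a b => f₀ a b + f₁ a b + f₂ a b) v ≤
      mult (subGraph G R₀) c f₀ v + mult (subGraph G R₁) c f₁ v +
      mult (subGraph G R₂) c f₂ v := by
  unfold mult
  rw [← sum_col_eq h₀, ← sum_col_eq h₁, ← sum_col_eq h₂, Finset.sum_add_distrib,
    Finset.sum_add_distrib, add_div, add_div]
  exact (Int.ceil_add_le _ _).trans (add_le_add_left (Int.ceil_add_le _ _) _)

end Helpers

/-- decomposition of a connected instance by distance classes mod 3.
(a) The restriction of any feasible assignment for `G` is feasible for each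
subinstance `G_i` at no larger cost, so `OPT(G_i) ≤ OPT(G)`;
(b) the sum of feasible assignments for `G_0,G_1,G_2` is feasible for `G` of cost
at most the sum of the three costs; consequently optimal assignments for the
`G_i` combine to an assignment of cost at most `3·OPT(G)`. -/
theorem three_layer_decomposition (G : SimpleGraph V) [DecidableRel G.Adj]
    (hG : G.Connected)
    (w c d : V → ℝ) (hw : ∀ v, 0 ≤ w v) (hc : ∀ v, 0 < c v) (hd : ∀ v, 0 ≤ d v)
    (u : V) :
    (∀ i : ℕ, i < 3 → ∀ f, Feasible G d f →
        Feasible (subGraph G (distClass G u i)) (subDemand d (distClass G u i))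
          (fun a b => if b ∈ closedNbhd (subGraph G (distClass G u i)) a then f a b else 0) ∧
        cost (subGraph G (distClass G u i)) w c
          (fun a b => if b ∈ closedNbhd (subGraph G (distClass G u i)) a then f a b else 0) ≤
          cost G w c f ∧
        OPT (subGraph G (distClass G u i)) w c (subDemand d (distClass G u i)) ≤
          OPT G w c d) ∧
    (∀ f₀ f₁ f₂,
        Feasible (subGraph G (distClass G u 0)) (subDemand d (distClass G u 0)) f₀ →
        Feasible (subGraph G (distClass G u 1)) (subDemand d (distClass G u 1)) f₁ →
        Feasible (subGraph G (distClass G u 2)) (subDemand d (distClass G u 2)) f₂ →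
        Feasible G d (fun a b => f₀ a b + f₁ a b + f₂ a b) ∧
        cost G w c (fun a b => f₀ a b + f₁ a b + f₂ a b) ≤
          cost (subGraph G (distClass G u 0)) w c f₀ +
          cost (subGraph G (distClass G u 1)) w c f₁ +
          cost (subGraph G (distClass G u 2)) w c f₂ ∧
        ((cost (subGraph G (distClass G u 0)) w c f₀ =
            OPT (subGraph G (distClass G u 0)) w c (subDemand d (distClass G u 0)) →
          cost (subGraph G (distClass G u 1)) w c f₁ =
            OPT (subGraph G (distClass G u 1)) w c (subDemand d (distClass G u 1)) →
          cost (subGraph G (distClass G u 2)) w c f₂ =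
            OPT (subGraph G (distClass G u 2)) w c (subDemand d (distClass G u 2)) →
          cost G w c (fun a b => f₀ a b + f₁ a b + f₂ a b) ≤ 3 * OPT G w c d))) := by
  have hw3 := hw; have hc3 := hc
  have parta : ∀ i : ℕ, i < 3 → ∀ f, Feasible G d f →
      Feasible (subGraph G (distClass G u i)) (subDemand d (distClass G u i))
        (fun a b => if b ∈ closedNbhd (subGraph G (distClass G u i)) a then f a b else 0) ∧
      cost (subGraph G (distClass G u i)) w c
        (fun a b => if b ∈ closedNbhd (subGraph G (distClass G u i)) a then f a b else 0) ≤
        cost G w c f ∧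
      OPT (subGraph G (distClass G u i)) w c (subDemand d (distClass G u i)) ≤
        OPT G w c d := by
    intro i _ f hf
    obtain ⟨h1, h2⟩ := restrict_feasible_cost (R := distClass G u i) hw hc hf
    exact ⟨h1, h2, OPT_sub_le hw hc hd⟩
  refine ⟨parta, ?_⟩
  intro f₀ f₁ f₂ hf₀ hf₁ hf₂
  set F : V → V → ℝ := fun a b => f₀ a b + f₁ a b + f₂ a b with hF
  have hFeas : Feasible G d F := by
    refine ⟨⟨fun a b => ?_, fun a b h => ?_⟩, fun a => ?_⟩
    · exact add_nonneg (add_nonneg (hf₀.1.1 a b) (hf₁.1.1 a b)) (hf₂.1.1 a b)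
    · have z : ∀ (R : Finset V) (g : V → V → ℝ),
          IsAssignment (subGraph G R) g → g a b = 0 := by
        intro R g hg
        apply hg.2
        intro hb
        exact h (sub_closedNbhd_subset R a hb)
      rw [hF]; dsimp only
      rw [z _ _ hf₀.1, z _ _ hf₁.1, z _ _ hf₂.1]; ring
    · -- a lies in exactly one distance class
      have key : ∀ (R : Finset V) (g : V → V → ℝ),
          Feasible (subGraph G R) (subDemand d R) g → a ∈ R →
          (∀ x, g a x ≤ F a x) →
          d a ≤ ∑ v ∈ closedNbhd G a, F a v := by
        intro R g hg ha hle
        have h1 : d a ≤ ∑ v ∈ closedNbhd (subGraph G R) a, g a v := by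
          have := hg.2 a
          rwa [subDemand, if_pos ha] at this
        refine h1.trans ?_
        rw [sub_closedNbhd_of_mem ha]
        apply Finset.sum_le_sum
        intro x _
        exact hle x
      have hmem : a ∈ distClass G u (G.dist u a % 3) := by
        simp [distClass]
      have hlt : G.dist u a % 3 < 3 := Nat.mod_lt _ (by norm_num)
      interval_cases h : G.dist u a % 3
      · refine key _ f₀ hf₀ (h ▸ hmem) fun x => ?_
        have h1' := hf₁.1.1 a x; have h2' := hf₂.1.1 a x
        simp only [hF]; linarith
      · refine key _ f₁ hf₁ (h ▸ hmem) fun x => ?_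
        have h1' := hf₀.1.1 a x; have h2' := hf₂.1.1 a x
        simp only [hF]; linarith
      · refine key _ f₂ hf₂ (h ▸ hmem) fun x => ?_
        have h1' := hf₀.1.1 a x; have h2' := hf₁.1.1 a x
        simp only [hF]; linarith
  have hcost : cost G w c F ≤
      cost (subGraph G (distClass G u 0)) w c f₀ +
      cost (subGraph G (distClass G u 1)) w c f₁ +
      cost (subGraph G (distClass G u 2)) w c f₂ := by
    unfold cost
    rw [← Finset.sum_add_distrib, ← Finset.sum_add_distrib]
    apply Finset.sum_le_sum
    intro v _
    rw [← mul_add, ← mul_add]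
    apply mul_le_mul_of_nonneg_left _ (hw v)
    have := mult_add3 hf₀.1 hf₁.1 hf₂.1 (c := c) v
    push_cast
    exact_mod_cast this
  refine ⟨hFeas, hcost, ?_⟩
  intro e0 e1 e2
  have o0 := OPT_sub_le (G := G) (R := distClass G u 0) hw hc hd
  have o1 := OPT_sub_le (G := G) (R := distClass G u 1) hw hc hd
  have o2 := OPT_sub_le (G := G) (R := distClass G u 2) hw hc hd
  calc cost G w c F ≤ _ := hcost
    _ ≤ OPT G w c d + OPT G w c d + OPT G w c d := by
        rw [e0, e1, e2]; exact add_le_add (add_le_add o0 o1) o2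
    _ = 3 * OPT G w c d := by ring
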